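/- Let S be the edge set of a spanning tree of G. Then c^S(x*) − c(x*) ≤ 2·Σ_{C∈ℒ_S} (x*(C) − 1)·c(S ∩ C), where c^S and c are extended linearly to vectors in ℝ^E_{≥0}. -/

import Mathlib

open Finset
open scoped Classical symmDiff

/-- A multigraph on vertex type `V` with edge type `E`, given by the two endpoints
of each edge. -/
structure MultiGraph (V E : Type*) where
  fst : E → V
  snd : E → V

namespace MultiGraph

variable {V E : Type*} [Fintype V] [DecidableEq V] [Fintype E] [DecidableEq E]
variable (G : MultiGraph V E)

/-- The cut `δ(U)`: the set of edges with exactly one endpoint in `U`. -/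
noncomputable def cut (U : Finset V) : Finset E :=
  univ.filter fun e => (G.fst e ∈ U ∧ G.snd e ∉ U) ∨ (G.fst e ∉ U ∧ G.snd e ∈ U)

/-- The degree of `v` with respect to the edge multiset `F`. -/
def deg (F : Multiset E) (v : V) : ℕ :=
  (F.map fun e => (if G.fst e = v then 1 else 0) + (if G.snd e = v then 1 else 0)).sum

/-- `odd(F)`: the set of vertices of odd degree in `(V, F)`. -/
noncomputable def oddVerts (F : Multiset E) : Finset V :=
  univ.filter fun v => Odd (G.deg F v)

/-- Adjacency via an edge satisfying the predicate `P`. -/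
def Adj (P : E → Prop) (a b : V) : Prop :=
  ∃ e, P e ∧ ((G.fst e = a ∧ G.snd e = b) ∨ (G.fst e = b ∧ G.snd e = a))

/-- `(V, {e | P e})` is a connected (spanning) subgraph. -/
def ConnectedOn (P : E → Prop) : Prop :=
  ∀ u w : V, Relation.ReflTransGen (G.Adj P) u w

/-- The graph `G` is connected. -/
def Connected : Prop := G.ConnectedOn fun _ => True

/-- A `T`-tour: a multi-subset `F` of the edges such that `(V, F)` is connected and
`odd(F) = T`. -/
def IsTTour (T : Finset V) (F : Multiset E) : Prop :=
  G.ConnectedOn (· ∈ F) ∧ G.oddVerts F = T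

/-- `S` is the edge set of a spanning tree of `G`. -/
def IsSpanningTree (S : Finset E) : Prop :=
  G.ConnectedOn (· ∈ S) ∧ S.card + 1 = Fintype.card V

/-- `δ(𝒲)`: the set of edges whose endpoints lie in different parts of the
partition `𝒲` of `V`. -/
noncomputable def partitionCut (W : Finpartition (univ : Finset V)) : Finset E :=
  univ.filter fun e => ∀ P ∈ W.parts, ¬(G.fst e ∈ P ∧ G.snd e ∈ P)

/-- Feasibility for the standard LP relaxation of the `T`-tour problem. -/
def LPFeasible (T : Finset V) (x : E → ℝ) : Prop :=
  (∀ e, 0 ≤ x e) ∧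
  (∀ U : Finset V, U.Nonempty → U ≠ univ → Even ((T ∩ U).card) →
    2 ≤ ∑ e ∈ G.cut U, x e) ∧
  (∀ W : Finpartition (univ : Finset V),
    (W.parts.card : ℝ) - 1 ≤ ∑ e ∈ G.partitionCut W, x e)

/-- `C` is a cut of `G`, i.e. `C = δ(U)` for some nonempty proper `U ⊆ V`. -/
def IsCut (C : Finset E) : Prop :=
  ∃ U : Finset V, U.Nonempty ∧ U ≠ univ ∧ C = G.cut U

/-- A narrow cut: a cut `C` with `x(C) < 2`. -/
def Narrow (x : E → ℝ) (C : Finset E) : Prop :=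
  G.IsCut C ∧ ∑ e ∈ C, x e < 2

/-- `𝒩`: the set of narrow cuts. -/
noncomputable def narrowCuts (x : E → ℝ) : Finset (Finset E) :=
  univ.filter fun C => G.Narrow x C

/-- A narrow cut `C` is lonely for `S` if `|S ∩ C| = 1`. -/
def Lonely (x : E → ℝ) (S C : Finset E) : Prop :=
  G.Narrow x C ∧ (S ∩ C).card = 1

/-- `ℒ_S`: the set of lonely cuts of `S`. -/
noncomputable def lonelyCuts (x : E → ℝ) (S : Finset E) : Finset (Finset E) :=
  univ.filter fun C => G.Lonely x S C

/-- `L_S = ∪_{C ∈ ℒ_S} (S ∩ C)`: the set of lonely edges of `S`. -/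
noncomputable def lonelyEdges (x : E → ℝ) (S : Finset E) : Finset E :=
  S.filter fun e => ∃ C, G.Lonely x S C ∧ e ∈ C

/-- The incidence vector `χ^F` of an edge set `F`. -/
def chi (F : Finset E) : E → ℝ := fun e => if e ∈ F then 1 else 0

/-- The vector `v^C = (1/(2 - x(C))) · Σ_{S : C ∈ ℒ_S} p_S · χ^{S ∩ C}`. -/
noncomputable def vC (x : E → ℝ) (p : Finset E → ℝ) (C : Finset E) : E → ℝ :=
  fun e => (1 / (2 - ∑ f ∈ C, x f)) *
    ∑ S : Finset E, (if G.Lonely x S C then p S else 0) * chi (S ∩ C) e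

/-- The modified cost
`c^S(e) = c(e) + 2·(Σ_{C ∈ ℒ_S : e ∈ C} c(S ∩ C) − max_{C ∈ ℒ_S : e ∈ C} c(S ∩ C))`,
where the maximum over the empty set is `0`. -/
noncomputable def modCost (c x : E → ℝ) (S : Finset E) (e : E) : ℝ :=
  c e + 2 * ((∑ C ∈ (G.lonelyCuts x S).filter (fun C => e ∈ C), ∑ f ∈ S ∩ C, c f)
    - (if h : ((G.lonelyCuts x S).filter (fun C => e ∈ C)).Nonempty
        then ((G.lonelyCuts x S).filter (fun C => e ∈ C)).sup' h (fun C => ∑ f ∈ S ∩ C, c f)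
        else 0))

/-- The set of vertices reachable from `v` using edges satisfying `P`. -/
noncomputable def reachSet (P : E → Prop) (v : V) : Finset V :=
  univ.filter fun w => Relation.ReflTransGen (G.Adj P) v w

end MultiGraph

namespace MultiGraph

variable {V E : Type*} [Fintype V] [DecidableEq V] [Fintype E] [DecidableEq E]

section Aux
set_option linter.unusedSectionVars false

variable {V E : Type*} [Fintype V] [DecidableEq V] [Fintype E] [DecidableEq E]

lemma adj_symm (G : MultiGraph V E) {P : E → Prop} : Symmetric (G.Adj P) := by
  rintro a b ⟨e, he, h | h⟩
  · exact ⟨e, he, Or.inr ⟨h.1, h.2⟩⟩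
  · exact ⟨e, he, Or.inl ⟨h.1, h.2⟩⟩

lemma rtg_symm (G : MultiGraph V E) {P : E → Prop} {a b : V}
    (h : Relation.ReflTransGen (G.Adj P) a b) : Relation.ReflTransGen (G.Adj P) b a := by
  induction h with
  | refl => exact .refl
  | tail _ h2 ih => exact (Relation.ReflTransGen.single (adj_symm G h2)).trans ih

lemma mem_reachSet (G : MultiGraph V E) {P : E → Prop} {v w : V} :
    w ∈ G.reachSet P v ↔ Relation.ReflTransGen (G.Adj P) v w := by
  simp [MultiGraph.reachSet]

lemma reachSet_eq_of_rtg (G : MultiGraph V E) {P : E → Prop} {u v : V}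
    (h : Relation.ReflTransGen (G.Adj P) u v) : G.reachSet P u = G.reachSet P v := by
  ext w
  simp only [mem_reachSet]
  exact ⟨fun h' => (rtg_symm G h).trans h', fun h' => h.trans h'⟩

lemma rtg_of_reachSet_eq (G : MultiGraph V E) {P : E → Prop} {u v : V}
    (h : G.reachSet P u = G.reachSet P v) : Relation.ReflTransGen (G.Adj P) u v := by
  have : v ∈ G.reachSet P v := (mem_reachSet G).2 .refl
  rw [← h] at this
  exact (mem_reachSet G).1 this

lemma mem_cut_iff (G : MultiGraph V E) {U : Finset V} {e : E} :
    e ∈ G.cut U ↔ ((G.fst e ∈ U ∧ G.snd e ∉ U) ∨ (G.fst e ∉ U ∧ G.snd e ∈ U)) := by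
  simp [MultiGraph.cut]

lemma cut_compl (G : MultiGraph V E) (U : Finset V) : G.cut (univ \ U) = G.cut U := by
  ext e
  simp only [mem_cut_iff, Finset.mem_sdiff, Finset.mem_univ, true_and]
  tauto

/-- Walks in a multigraph along edges satisfying `P`. -/
def MGWalk (G : MultiGraph V E) (P : E → Prop) : V → List E → V → Prop
  | u, [], w => u = w
  | u, e :: l, w => P e ∧ ((G.fst e = u ∧ MGWalk G P (G.snd e) l w) ∨
      (G.snd e = u ∧ MGWalk G P (G.fst e) l w))

lemma mgwalk_append (G : MultiGraph V E) {P : E → Prop} {l₁ l₂ : List E} {w : V} :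
    ∀ {u : V}, MGWalk G P u (l₁ ++ l₂) w ↔ ∃ v, MGWalk G P u l₁ v ∧ MGWalk G P v l₂ w := by
  induction l₁ with
  | nil => intro u; simp [MGWalk]
  | cons e l ih =>
    intro u
    simp only [List.cons_append, MGWalk, List.append_eq, ih]
    constructor
    · rintro ⟨hPe, ⟨h1, v, hv1, hv2⟩ | ⟨h1, v, hv1, hv2⟩⟩
      · exact ⟨v, ⟨hPe, Or.inl ⟨h1, hv1⟩⟩, hv2⟩
      · exact ⟨v, ⟨hPe, Or.inr ⟨h1, hv1⟩⟩, hv2⟩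
    · rintro ⟨v, ⟨hPe, ⟨h1, hv1⟩ | ⟨h1, hv1⟩⟩, hv2⟩
      · exact ⟨hPe, Or.inl ⟨h1, v, hv1, hv2⟩⟩
      · exact ⟨hPe, Or.inr ⟨h1, v, hv1, hv2⟩⟩

lemma rtg_iff_mgwalk (G : MultiGraph V E) {P : E → Prop} {u w : V} :
    Relation.ReflTransGen (G.Adj P) u w ↔ ∃ l, MGWalk G P u l w := by
  constructor
  · intro h
    induction h with
    | refl => exact ⟨[], rfl⟩
    | tail h1 h2 ih =>
      obtain ⟨l, hl⟩ := ih
      obtain ⟨e, he, hor⟩ := h2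
      refine ⟨l ++ [e], (mgwalk_append G).2 ⟨_, hl, ?_⟩⟩
      rcases hor with ⟨h1', h2'⟩ | ⟨h1', h2'⟩
      · exact ⟨he, Or.inl ⟨h1', h2'⟩⟩
      · exact ⟨he, Or.inr ⟨h2', h1'⟩⟩
  · rintro ⟨l, hl⟩
    induction l generalizing u with
    | nil => exact hl ▸ .refl
    | cons e l ih =>
      obtain ⟨he, hor⟩ := hl
      rcases hor with ⟨h1, h2⟩ | ⟨h1, h2⟩
      · exact .head ⟨e, he, Or.inl ⟨h1, rfl⟩⟩ (ih h2)
      · exact .head ⟨e, he, Or.inr ⟨rfl, h1⟩⟩ (ih h2)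

lemma mgwalk_mem (G : MultiGraph V E) {P : E → Prop} :
    ∀ {l : List E} {u w : V}, MGWalk G P u l w → ∀ e ∈ l, P e := by
  intro l
  induction l with
  | nil => intro u w _ e he; simp at he
  | cons f l ih =>
    intro u w hw e he
    obtain ⟨hf, hor⟩ := hw
    rcases List.mem_cons.1 he with rfl | he'
    · exact hf
    · rcases hor with ⟨_, h2⟩ | ⟨_, h2⟩ <;> exact ih h2 e he'

lemma mgwalk_side (G : MultiGraph V E) {P : E → Prop} {U : Finset V} :
    ∀ {l : List E} {u w : V}, MGWalk G P u l w → (∀ e ∈ l, e ∉ G.cut U) →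
      (u ∈ U ↔ w ∈ U) := by
  intro l
  induction l with
  | nil => intro u w hw _; exact hw ▸ Iff.rfl
  | cons e l ih =>
    intro u w hw hcut
    obtain ⟨hf, hor⟩ := hw
    have hside : ¬ ((G.fst e ∈ U ∧ G.snd e ∉ U) ∨ (G.fst e ∉ U ∧ G.snd e ∈ U)) := by
      have := hcut e List.mem_cons_self
      rwa [mem_cut_iff] at this
    have hrest : ∀ f ∈ l, f ∉ G.cut U := fun f hf' => hcut f (List.mem_cons_of_mem e hf')
    rcases hor with ⟨h1, h2⟩ | ⟨h1, h2⟩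
    · have := ih h2 hrest
      rw [← h1]; tauto
    · have := ih h2 hrest
      rw [← h1]; tauto

lemma rtg_side (G : MultiGraph V E) {P : E → Prop} {U : Finset V} {u w : V}
    (h : Relation.ReflTransGen (G.Adj P) u w) (hP : ∀ e, P e → e ∉ G.cut U) :
    (u ∈ U ↔ w ∈ U) := by
  obtain ⟨l, hl⟩ := (rtg_iff_mgwalk G).1 h
  exact mgwalk_side G hl (fun e he => hP e (mgwalk_mem G hl e he))

/-- Removing an edge from the edge set: a walk either avoids the edge, or both ends
reach an endpoint of the edge. -/
lemma rtg_split (G : MultiGraph V E) {P P' : E → Prop} {e : E}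
    (hP : ∀ f, P f ↔ f = e ∨ P' f) {v w : V}
    (h : Relation.ReflTransGen (G.Adj P) v w) :
    Relation.ReflTransGen (G.Adj P') v w ∨
      ((Relation.ReflTransGen (G.Adj P') v (G.fst e) ∨
        Relation.ReflTransGen (G.Adj P') v (G.snd e)) ∧
       (Relation.ReflTransGen (G.Adj P') w (G.fst e) ∨
        Relation.ReflTransGen (G.Adj P') w (G.snd e))) := by
  induction h with
  | refl => exact Or.inl .refl
  | @tail m w h1 h2 ih =>
    obtain ⟨f, hf, hor⟩ := h2
    rcases (hP f).1 hf with rfl | hP'f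
    · -- the step uses the edge `e` itself (f = e)
      have hm : m = G.fst f ∨ m = G.snd f := by tauto
      have hw : w = G.fst f ∨ w = G.snd f := by tauto
      have hm' : Relation.ReflTransGen (G.Adj P') m (G.fst f) ∨
          Relation.ReflTransGen (G.Adj P') m (G.snd f) := by
        rcases hm with rfl | rfl
        · exact Or.inl .refl
        · exact Or.inr .refl
      have hw' : Relation.ReflTransGen (G.Adj P') w (G.fst f) ∨
          Relation.ReflTransGen (G.Adj P') w (G.snd f) := by
        rcases hw with rfl | rfl
        · exact Or.inl .refl
        · exact Or.inr .refl
      rcases ih with h' | ⟨hv', _⟩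
      · refine Or.inr ⟨?_, hw'⟩
        rcases hm' with hh | hh
        · exact Or.inl (h'.trans hh)
        · exact Or.inr (h'.trans hh)
      · exact Or.inr ⟨hv', hw'⟩
    · have step : G.Adj P' m w := ⟨f, hP'f, hor⟩
      rcases ih with h' | ⟨hv', hm'⟩
      · exact Or.inl (h'.tail step)
      · refine Or.inr ⟨hv', ?_⟩
        have hwm : Relation.ReflTransGen (G.Adj P') w m :=
          Relation.ReflTransGen.single (adj_symm G step)
        rcases hm' with hh | hh
        · exact Or.inl (hwm.trans hh)
        · exact Or.inr (hwm.trans hh)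

end Aux

section Aux2
set_option linter.unusedSectionVars false

variable {V E : Type*} [Fintype V] [DecidableEq V] [Fintype E] [DecidableEq E]

lemma reachSet_empty (G : MultiGraph V E) (v : V) :
    G.reachSet (· ∈ (∅ : Finset E)) v = {v} := by
  ext w
  simp only [mem_reachSet, Finset.mem_singleton]
  constructor
  · intro h
    induction h with
    | refl => rfl
    | tail _ h2 ih => obtain ⟨e, he, _⟩ := h2; simp at he
  · rintro rfl; exact .refl

/-- The number of connected components is at least `|V| - |Q|`. -/
lemma card_reach_image (G : MultiGraph V E) :
    ∀ Q : Finset E,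
      Fintype.card V ≤ (univ.image fun v => G.reachSet (· ∈ Q) v).card + Q.card := by
  intro Q
  induction Q using Finset.induction_on with
  | empty =>
    have h1 : (univ.image fun v => G.reachSet (· ∈ (∅ : Finset E)) v)
        = univ.image (fun v => ({v} : Finset V)) :=
      Finset.image_congr fun v _ => reachSet_empty G v
    rw [h1, Finset.card_image_of_injective _ (fun a b h => Finset.singleton_injective h),
      Finset.card_univ, Finset.card_empty]
    omega
  | @insert e Q he ih =>
    set R := fun v => G.reachSet (· ∈ Q) v with hR
    set R' := fun v => G.reachSet (· ∈ insert e Q) v with hR'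
    have hsplit : ∀ v w : V, R' v = R' w →
        R v = R w ∨ ((R v = R (G.fst e) ∨ R v = R (G.snd e)) ∧
          (R w = R (G.fst e) ∨ R w = R (G.snd e))) := by
      intro v w h
      have hrtg : Relation.ReflTransGen (G.Adj (· ∈ insert e Q)) v w :=
        rtg_of_reachSet_eq G h
      have hP : ∀ f, f ∈ insert e Q ↔ f = e ∨ f ∈ Q := fun f => Finset.mem_insert
      rcases rtg_split G hP hrtg with h' | ⟨hv, hw⟩
      · exact Or.inl (reachSet_eq_of_rtg G h')
      · refine Or.inr ⟨?_, ?_⟩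
        · rcases hv with h' | h'
          · exact Or.inl (reachSet_eq_of_rtg G h')
          · exact Or.inr (reachSet_eq_of_rtg G h')
        · rcases hw with h' | h'
          · exact Or.inl (reachSet_eq_of_rtg G h')
          · exact Or.inr (reachSet_eq_of_rtg G h')
    -- card (image R) ≤ card (image R') + 1
    have hcard : (univ.image R).card ≤ (univ.image R').card + 1 := by
      have hb : R (G.snd e) ∈ univ.image R := Finset.mem_image_of_mem R (Finset.mem_univ _)
      have hsub : univ.image R ⊆ insert (R (G.snd e)) ((univ.image R).erase (R (G.snd e))) := by
        intro s hs
        by_cases h : s = R (G.snd e)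
        · simp [h]
        · exact Finset.mem_insert_of_mem (Finset.mem_erase.2 ⟨h, hs⟩)
      have h1 : (univ.image R).card ≤ ((univ.image R).erase (R (G.snd e))).card + 1 := by
        calc (univ.image R).card
            ≤ (insert (R (G.snd e)) ((univ.image R).erase (R (G.snd e)))).card :=
              Finset.card_le_card hsub
          _ ≤ ((univ.image R).erase (R (G.snd e))).card + 1 := Finset.card_insert_le _ _
      have h2 : ((univ.image R).erase (R (G.snd e))).card ≤ (univ.image R').card := by
        classical
        set φ : Finset V → Finset V :=
          fun s => if h : ∃ v, R v = s then R' h.choose else ∅ with hφ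
        apply Finset.card_le_card_of_injOn φ
        · intro s hs
          obtain ⟨hne, hs'⟩ := Finset.mem_erase.1 hs
          obtain ⟨v, _, hv⟩ := Finset.mem_image.1 hs'
          have hex : ∃ u, R u = s := ⟨v, hv⟩
          simp only [hφ, dif_pos hex]
          exact Finset.mem_image_of_mem R' (Finset.mem_univ _)
        · intro s hs t ht hst
          obtain ⟨hnes, hs'⟩ := Finset.mem_erase.1 hs
          obtain ⟨hnet, ht'⟩ := Finset.mem_erase.1 ht
          obtain ⟨v, _, hv⟩ := Finset.mem_image.1 hs'
          obtain ⟨w, _, hw⟩ := Finset.mem_image.1 ht'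
          have hexs : ∃ u, R u = s := ⟨v, hv⟩
          have hext : ∃ u, R u = t := ⟨w, hw⟩
          simp only [hφ, dif_pos hexs, dif_pos hext] at hst
          have hvs := hexs.choose_spec
          have hwt := hext.choose_spec
          rcases hsplit _ _ hst with h' | ⟨h1', h2'⟩
          · rw [← hvs, ← hwt, h']
          · rcases h1' with h1' | h1'
            · rcases h2' with h2' | h2'
              · rw [← hvs, ← hwt, h1', h2']
              · exact absurd (hwt ▸ h2') hnet
            · exact absurd (hvs ▸ h1') hnes
      omega
    calc Fintype.card V ≤ (univ.image R).card + Q.card := ih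
      _ ≤ (univ.image R').card + 1 + Q.card := by omega
      _ = (univ.image R').card + (insert e Q).card := by
          rw [Finset.card_insert_of_notMem he]; omega

lemma card_image_le_of_factor {α β : Type*} [DecidableEq α] [DecidableEq β] [Nonempty V]
    (f : V → α) (g : V → β) (H : ∀ u v : V, g u = g v → f u = f v) :
    (univ.image f).card ≤ (univ.image g).card := by
  classical
  set φ : β → α := fun t => if h : ∃ v, g v = t then f h.choose else f (Classical.arbitrary V)
    with hφ
  apply Finset.card_le_card_of_surjOn φ
  intro y hy
  obtain ⟨v, _, hv⟩ := Finset.mem_image.1 hy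
  refine ⟨g v, by simp [Finset.mem_coe, Finset.mem_image_of_mem g (Finset.mem_univ v)], ?_⟩
  have hex : ∃ u, g u = g v := ⟨v, rfl⟩
  simp only [hφ, dif_pos hex]
  rw [H _ _ hex.choose_spec, hv]

end Aux2

section Aux3
set_option linter.unusedSectionVars false

variable {V E : Type*} [Fintype V] [DecidableEq V] [Fintype E] [DecidableEq E]

/-- A cut containing exactly one tree edge `f` equals the fundamental cut of `f`. -/
lemma cut_eq_fundamental (G : MultiGraph V E) {S : Finset E} (hS : G.IsSpanningTree S)
    {U : Finset V} {f : E} (hf : S ∩ G.cut U = {f}) :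
    G.cut U = G.cut (univ.filter fun v =>
      G.reachSet (fun e => e ∈ S ∧ e ≠ f) v
        = G.reachSet (fun e => e ∈ S ∧ e ≠ f) (G.fst f)) := by
  set P' : E → Prop := fun e => e ∈ S ∧ e ≠ f with hP'
  set R : V → Finset V := fun v => G.reachSet P' v with hRdef
  have hfS : f ∈ S ∧ f ∈ G.cut U := by
    have : f ∈ S ∩ G.cut U := hf ▸ Finset.mem_singleton_self f
    exact ⟨(Finset.mem_inter.1 this).1, (Finset.mem_inter.1 this).2⟩
  have hnotcut : ∀ e, P' e → e ∉ G.cut U := by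
    rintro e ⟨heS, hef⟩ hecut
    have : e ∈ S ∩ G.cut U := Finset.mem_inter.2 ⟨heS, hecut⟩
    rw [hf, Finset.mem_singleton] at this
    exact hef this
  have hside : ∀ v w : V, Relation.ReflTransGen (G.Adj P') v w → (v ∈ U ↔ w ∈ U) :=
    fun v w h => rtg_side G h hnotcut
  have hxor : (G.fst f ∈ U ∧ G.snd f ∉ U) ∨ (G.fst f ∉ U ∧ G.snd f ∈ U) :=
    (mem_cut_iff G).1 hfS.2
  have hall : ∀ v, R v = R (G.fst f) ∨ R v = R (G.snd f) := by
    intro v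
    have hrtg : Relation.ReflTransGen (G.Adj (· ∈ S)) v (G.fst f) := hS.1 v (G.fst f)
    have hP : ∀ e, e ∈ S ↔ e = f ∨ P' e := by
      intro e
      constructor
      · intro heS; by_cases h : e = f
        · exact Or.inl h
        · exact Or.inr ⟨heS, h⟩
      · rintro (rfl | ⟨heS, _⟩)
        · exact hfS.1
        · exact heS
    rcases rtg_split G hP hrtg with h' | ⟨hv, _⟩
    · exact Or.inl (reachSet_eq_of_rtg G h')
    · rcases hv with h' | h'
      · exact Or.inl (reachSet_eq_of_rtg G h')
      · exact Or.inr (reachSet_eq_of_rtg G h')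
  have hab : R (G.fst f) ≠ R (G.snd f) := by
    intro h
    have := hside _ _ (rtg_of_reachSet_eq G h)
    tauto
  have hrside : ∀ v w : V, R v = R w → (v ∈ U ↔ w ∈ U) :=
    fun v w h => hside v w (rtg_of_reachSet_eq G h)
  set A : Finset V := univ.filter fun v => R v = R (G.fst f) with hA
  rcases hxor with ⟨ha, hb⟩ | ⟨ha, hb⟩
  · -- fst f ∈ U : U = A
    have : U = A := by
      ext v
      simp only [hA, Finset.mem_filter, Finset.mem_univ, true_and]
      constructor
      · intro hv
        rcases hall v with h' | h'
        · exact h'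
        · exact absurd ((hrside _ _ h').1 hv) hb
      · intro h'
        exact (hrside _ _ h').2 ha
    rw [← this]
  · -- snd f ∈ U : U = univ \ A
    have : U = univ \ A := by
      ext v
      simp only [hA, Finset.mem_sdiff, Finset.mem_filter, Finset.mem_univ, true_and]
      constructor
      · intro hv
        rcases hall v with h' | h'
        · exact absurd ((hrside _ _ h').1 hv) ha
        · rw [h']; exact fun hcon => hab hcon.symm
      · intro h'
        rcases hall v with h'' | h''
        · exact absurd h'' h'
        · exact (hrside _ _ h'').2 hb
    rw [← cut_compl G A, ← this]

/-- Two lonely cuts sharing a tree edge are equal. -/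
lemma lonely_eq_of_shared_edge (G : MultiGraph V E) {x : E → ℝ} {S : Finset E}
    (hS : G.IsSpanningTree S) {C C' : Finset E} {f : E}
    (hC : G.Lonely x S C) (hC' : G.Lonely x S C') (hf : f ∈ S ∩ C) (hf' : f ∈ S ∩ C') :
    C = C' := by
  obtain ⟨⟨⟨U, _, _, rfl⟩, _⟩, hcard⟩ := hC
  obtain ⟨⟨⟨U', _, _, rfl⟩, _⟩, hcard'⟩ := hC'
  have h1 : S ∩ G.cut U = {f} := by
    obtain ⟨a, ha⟩ := Finset.card_eq_one.1 hcard
    have := hf; rw [ha, Finset.mem_singleton] at this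
    rw [ha, this]
  have h2 : S ∩ G.cut U' = {f} := by
    obtain ⟨a, ha⟩ := Finset.card_eq_one.1 hcard'
    have := hf'; rw [ha, Finset.mem_singleton] at this
    rw [ha, this]
  rw [cut_eq_fundamental G hS h1, cut_eq_fundamental G hS h2]

lemma exists_last_split {α : Type*} [DecidableEq α] {e : α} :
    ∀ {l : List α}, e ∈ l → ∃ l₁ l₂, l = l₁ ++ e :: l₂ ∧ e ∉ l₂ := by
  intro l
  induction l with
  | nil => intro h; simp at h
  | cons a t ih =>
    intro h
    by_cases ht : e ∈ t
    · obtain ⟨l₁, l₂, rfl, hn⟩ := ih ht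
      exact ⟨a :: l₁, l₂, rfl, hn⟩
    · have : e = a := by
        rcases List.mem_cons.1 h with h' | h'
        · exact h'
        · exact absurd h' ht
      cases this
      exact ⟨[], t, rfl, ht⟩

set_option maxHeartbeats 1000000 in
/-- Main reconnection lemma: vertices on the same side of every lonely cut in `ℱ`
are connected in `S` minus the lonely edges of `ℱ`. -/
lemma walk_reconnect (G : MultiGraph V E) {S : Finset E} {ℱ : Finset (Finset E)}
    {Uof : Finset E → Finset V}
    (hcut : ∀ C ∈ ℱ, C = G.cut (Uof C)) (hone : ∀ C ∈ ℱ, (S ∩ C).card = 1)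
    {F : Finset E} (hF : ∀ e, e ∈ F ↔ ∃ C ∈ ℱ, e ∈ S ∩ C) :
    ∀ (n : ℕ) (l : List E) (u w : V), l.length ≤ n → MGWalk G (· ∈ S) u l w →
      (∀ C ∈ ℱ, (u ∈ Uof C ↔ w ∈ Uof C)) →
      Relation.ReflTransGen (G.Adj fun e => e ∈ S ∧ e ∉ F) u w := by
  intro n
  induction n with
  | zero =>
    intro l u w hlen hw _
    rw [List.length_eq_zero_iff.1 (Nat.le_zero.1 hlen)] at hw
    exact hw ▸ .refl
  | succ n ih =>
    intro l u w hlen hw hsides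
    match l with
    | [] => exact hw ▸ .refl
    | e :: l' =>
      obtain ⟨heS, hor⟩ := hw
      -- v := the other endpoint of e
      obtain ⟨v, hv_ends, hv_walk⟩ :
          ∃ v, ((G.fst e = u ∧ G.snd e = v) ∨ (G.snd e = u ∧ G.fst e = v)) ∧
            MGWalk G (· ∈ S) v l' w := by
        rcases hor with ⟨h1, h2⟩ | ⟨h1, h2⟩
        · exact ⟨G.snd e, Or.inl ⟨h1, rfl⟩, h2⟩
        · exact ⟨G.fst e, Or.inr ⟨h1, rfl⟩, h2⟩
      have hlen' : l'.length ≤ n := by simpa using hlen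
      by_cases heF : e ∈ F
      · -- e is the lonely edge of some cut C₀
        obtain ⟨C₀, hC₀ℱ, heC₀⟩ := (hF e).1 heF
        have hSC₀ : S ∩ C₀ = {e} := by
          obtain ⟨a, ha⟩ := Finset.card_eq_one.1 (hone C₀ hC₀ℱ)
          have := heC₀; rw [ha, Finset.mem_singleton] at this
          rw [ha, this]
        have hecut : e ∈ G.cut (Uof C₀) := by
          rw [← hcut C₀ hC₀ℱ]; exact (Finset.mem_inter.1 heC₀).2
        have hxor : (G.fst e ∈ Uof C₀ ∧ G.snd e ∉ Uof C₀) ∨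
            (G.fst e ∉ Uof C₀ ∧ G.snd e ∈ Uof C₀) := (mem_cut_iff G).1 hecut
        have huv : ¬ (u ∈ Uof C₀ ↔ v ∈ Uof C₀) := by
          rcases hv_ends with ⟨h1, h2⟩ | ⟨h1, h2⟩ <;> rw [← h1, ← h2] <;> tauto
        have hnc : ∀ g ∈ l', g ≠ e → g ∉ G.cut (Uof C₀) := by
          intro g hg hge hgcut
          have hgS : g ∈ S := mgwalk_mem G hv_walk g hg
          have : g ∈ S ∩ C₀ := Finset.mem_inter.2 ⟨hgS, by rw [hcut C₀ hC₀ℱ]; exact hgcut⟩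
          rw [hSC₀, Finset.mem_singleton] at this
          exact hge this
        have hel' : e ∈ l' := by
          by_contra hnel
          have := mgwalk_side G hv_walk (fun g hg => hnc g hg (fun h => hnel (h ▸ hg)))
          have huw := hsides C₀ hC₀ℱ
          tauto
        obtain ⟨l₁, l₂, rfl, hnl₂⟩ := exists_last_split hel'
        obtain ⟨p, _, hp2⟩ := (mgwalk_append G).1 hv_walk
        obtain ⟨_, hor₂⟩ := hp2
        obtain ⟨q, hq_ends, hq_walk⟩ :
            ∃ q, ((G.fst e = p ∧ G.snd e = q) ∨ (G.snd e = p ∧ G.fst e = q)) ∧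
              MGWalk G (· ∈ S) q l₂ w := by
          rcases hor₂ with ⟨h1, h2⟩ | ⟨h1, h2⟩
          · exact ⟨G.snd e, Or.inl ⟨h1, rfl⟩, h2⟩
          · exact ⟨G.fst e, Or.inr ⟨h1, rfl⟩, h2⟩
        have hqw : (q ∈ Uof C₀ ↔ w ∈ Uof C₀) :=
          mgwalk_side G hq_walk (fun g hg => hnc g (by simp [hg]) (fun h => hnl₂ (h ▸ hg)))
        have huw := hsides C₀ hC₀ℱ
        have hq_u_same : (q ∈ Uof C₀ ↔ u ∈ Uof C₀) := hqw.trans huw.symm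
        have hqu : q = u := by
          rcases hq_ends with ⟨h1, h2⟩ | ⟨h1, h2⟩ <;> rcases hv_ends with ⟨h3, h4⟩ | ⟨h3, h4⟩
          · exfalso; rw [← h2, ← h3] at hq_u_same; tauto
          · rw [← h2, ← h3]
          · rw [← h2, ← h3]
          · exfalso; rw [← h2, ← h3] at hq_u_same; tauto
        have hlen₂ : l₂.length ≤ n := by
          have := hlen
          simp only [List.length_cons, List.length_append] at this
          omega
        exact ih l₂ u w hlen₂ (hqu ▸ hq_walk) hsides
      · -- e is not a lonely edge: take the step and recurse
        have hstep : G.Adj (fun g => g ∈ S ∧ g ∉ F) u v := by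
          refine ⟨e, ⟨heS, heF⟩, ?_⟩
          rcases hv_ends with ⟨h1, h2⟩ | ⟨h1, h2⟩
          · exact Or.inl ⟨h1, h2⟩
          · exact Or.inr ⟨h2, h1⟩
        have hv_sides : ∀ C ∈ ℱ, (v ∈ Uof C ↔ w ∈ Uof C) := by
          intro C hC
          have hecutC : e ∉ G.cut (Uof C) := by
            intro hcon
            exact heF ((hF e).2 ⟨C, hC, Finset.mem_inter.2 ⟨heS, by rw [hcut C hC]; exact hcon⟩⟩)
          have hsame : (u ∈ Uof C ↔ v ∈ Uof C) := by
            rw [mem_cut_iff] at hecutC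
            rcases hv_ends with ⟨h1, h2⟩ | ⟨h1, h2⟩ <;> rw [← h1, ← h2] <;> tauto
          rw [← hsame]; exact hsides C hC
        exact .head hstep (ih l' v w hlen' hv_walk hv_sides)

end Aux3

section Aux4
set_option linter.unusedSectionVars false

variable {V E : Type*} [Fintype V] [DecidableEq V] [Fintype E] [DecidableEq E]

lemma mem_lonelyCuts (G : MultiGraph V E) {x : E → ℝ} {S C : Finset E} :
    C ∈ G.lonelyCuts x S ↔ G.Lonely x S C := by
  simp [MultiGraph.lonelyCuts]

/-- A choice of shore for each cut. -/
noncomputable def cutRep (G : MultiGraph V E) (C : Finset E) : Finset V :=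
  if h : G.IsCut C then h.choose else ∅

lemma cutRep_spec (G : MultiGraph V E) {C : Finset E} (h : G.IsCut C) :
    C = G.cut (G.cutRep C) := by
  rw [cutRep, dif_pos h]
  exact h.choose_spec.2.2

/-- For any family of lonely cuts, `x(⋃ℱ) ≥ |ℱ|`. -/
lemma partition_bound (G : MultiGraph V E) {T : Finset V} {x : E → ℝ} {S : Finset E}
    (hx : G.LPFeasible T x) (hS : G.IsSpanningTree S)
    {ℱ : Finset (Finset E)} (hℱ : ℱ ⊆ G.lonelyCuts x S) :
    (ℱ.card : ℝ) ≤ ∑ e ∈ univ.filter (fun e => ∃ C ∈ ℱ, e ∈ C), x e := by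
  have hV : Nonempty V := by
    rw [← Fintype.card_pos_iff, ← hS.2]; omega
  have hlon : ∀ C ∈ ℱ, G.Lonely x S C := fun C hC => (mem_lonelyCuts G).1 (hℱ hC)
  have hcut : ∀ C ∈ ℱ, C = G.cut (G.cutRep C) := fun C hC => cutRep_spec G (hlon C hC).1.1
  have hone : ∀ C ∈ ℱ, (S ∩ C).card = 1 := fun C hC => (hlon C hC).2
  set F : Finset E := ℱ.biUnion (fun C => S ∩ C) with hFdef
  have hF : ∀ e, e ∈ F ↔ ∃ C ∈ ℱ, e ∈ S ∩ C := fun e => Finset.mem_biUnion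
  have hFS : F ⊆ S := by
    intro e he; obtain ⟨C, _, h⟩ := (hF e).1 he; exact (Finset.mem_inter.1 h).1
  have hFcard : F.card = ℱ.card := by
    rw [hFdef, Finset.card_biUnion]
    · rw [Finset.sum_congr rfl hone, Finset.sum_const, smul_eq_mul, mul_one]
    · intro C hC C' hC' hne
      obtain ⟨f, hf⟩ := Finset.card_eq_one.1 (hone C hC)
      obtain ⟨f', hf'⟩ := Finset.card_eq_one.1 (hone C' hC')
      show Disjoint (S ∩ C) (S ∩ C')
      rw [hf, hf', Finset.disjoint_singleton]
      intro hcon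
      subst hcon
      exact hne (lonely_eq_of_shared_edge G hS (hlon C hC) (hlon C' hC')
        (hf ▸ Finset.mem_singleton_self f) (hf' ▸ Finset.mem_singleton_self f))
  -- signature classes
  set r : V → V → Prop := fun u w => ∀ C ∈ ℱ, (u ∈ G.cutRep C ↔ w ∈ G.cutRep C) with hr
  set sigcl : V → Finset V := fun v => univ.filter (r v) with hsig
  have hrrefl : ∀ v, r v v := fun v C _ => Iff.rfl
  have hrsymm : ∀ u v, r u v → r v u := fun u v h C hC => (h C hC).symm
  have hrtrans : ∀ u v w, r u v → r v w → r u w := fun u v w h h' C hC =>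
    (h C hC).trans (h' C hC)
  have hmem_sig : ∀ v w, w ∈ sigcl v ↔ r v w := by
    intro v w; simp [hsig]
  have hclass : ∀ u v, r u v → sigcl u = sigcl v := by
    intro u v h
    ext w
    rw [hmem_sig, hmem_sig]
    exact ⟨fun h' => hrtrans _ _ _ (hrsymm _ _ h) h', fun h' => hrtrans _ _ _ h h'⟩
  set parts : Finset (Finset V) := univ.image sigcl with hparts
  have hmemparts : ∀ v, sigcl v ∈ parts := fun v =>
    Finset.mem_image_of_mem sigcl (Finset.mem_univ v)
  have hself : ∀ v, v ∈ sigcl v := fun v => (hmem_sig v v).2 (hrrefl v)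
  set W : Finpartition (univ : Finset V) :=
    { parts := parts
      supIndep := by
        rw [Finset.supIndep_iff_pairwiseDisjoint]
        intro s hs t ht hne
        obtain ⟨u, _, rfl⟩ := Finset.mem_image.1 (Finset.mem_coe.1 hs)
        obtain ⟨v, _, rfl⟩ := Finset.mem_image.1 (Finset.mem_coe.1 ht)
        simp only [Function.onFun, id]
        rw [Finset.disjoint_left]
        intro a ha ha'
        exact hne (by
          rw [hclass u v (hrtrans _ _ _ ((hmem_sig u a).1 ha)
            (hrsymm _ _ ((hmem_sig v a).1 ha')))])
      sup_parts := by
        apply le_antisymm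
        · exact Finset.sup_le fun s _ => le_top
        · intro v _
          exact Finset.mem_sup.2 ⟨sigcl v, hmemparts v, hself v⟩
      bot_notMem := by
        intro h
        obtain ⟨v, _, hv⟩ := Finset.mem_image.1 h
        have := hself v
        rw [hv] at this
        simp at this } with hW
  have hLP := hx.2.2 W
  have hWparts : W.parts = parts := rfl
  rw [hWparts] at hLP
  have hsubset : G.partitionCut W ⊆ univ.filter (fun e => ∃ C ∈ ℱ, e ∈ C) := by
    intro e he
    simp only [MultiGraph.partitionCut, Finset.mem_filter, Finset.mem_univ, true_and] at he
    have h1 := he (sigcl (G.fst e)) (hWparts ▸ hmemparts _)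
    have h2 : ¬ r (G.fst e) (G.snd e) := fun hcon =>
      h1 ⟨hself _, (hmem_sig _ _).2 hcon⟩
    have h3 : ∃ C, C ∈ ℱ ∧ ¬ (G.fst e ∈ G.cutRep C ↔ G.snd e ∈ G.cutRep C) := by
      by_contra h4
      push_neg at h4
      exact h2 (fun C hC => h4 C hC)
    obtain ⟨C, hC, hiff⟩ := h3
    refine Finset.mem_filter.2 ⟨Finset.mem_univ e, C, hC, ?_⟩
    rw [hcut C hC, mem_cut_iff]
    tauto
  have hcount : ℱ.card + 1 ≤ parts.card := by
    have hreach := card_reach_image G (S \ F)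
    have hcard_sdiff : (S \ F).card + F.card = S.card :=
      Finset.card_sdiff_add_card_eq_card hFS
    set comp : V → Finset V := fun v => G.reachSet (· ∈ (S \ F)) v with hcomp
    have hfac : ∀ u v : V, sigcl u = sigcl v → comp u = comp v := by
      intro u v h
      have hruv : r u v := (hmem_sig u v).1 (h ▸ hself v)
      obtain ⟨l, hl⟩ := (rtg_iff_mgwalk G).1 (hS.1 u v)
      have hrtg := walk_reconnect G hcut hone hF l.length l u v le_rfl hl hruv
      have hpred : (fun e => e ∈ S ∧ e ∉ F) = (· ∈ (S \ F)) := by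
        funext e
        exact propext (Finset.mem_sdiff).symm
      rw [hpred] at hrtg
      exact reachSet_eq_of_rtg G hrtg
    have hle := card_image_le_of_factor comp sigcl hfac
    have hcardV : Fintype.card V = S.card + 1 := hS.2.symm
    have hpc : parts.card = (univ.image sigcl).card := rfl
    omega
  have hfinal : (ℱ.card : ℝ) + 1 ≤ (parts.card : ℝ) := by exact_mod_cast hcount
  calc (ℱ.card : ℝ) ≤ (parts.card : ℝ) - 1 := by linarith
    _ ≤ ∑ e ∈ G.partitionCut W, x e := hLP
    _ ≤ ∑ e ∈ univ.filter (fun e => ∃ C ∈ ℱ, e ∈ C), x e :=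
        Finset.sum_le_sum_of_subset_of_nonneg hsubset (fun e _ _ => hx.1 e)

end Aux4

section Aux5
set_option linter.unusedSectionVars false

variable {V E : Type*} [Fintype V] [DecidableEq V] [Fintype E] [DecidableEq E]

/-- Key inequality: `Σ_{C∈ℱ} g(C) ≤ Σ_e x_e · max_{C∈ℱ : e∈C} g(C)`. -/
lemma key_bound (G : MultiGraph V E) {T : Finset V} {x : E → ℝ} {S : Finset E}
    (hx : G.LPFeasible T x) (hS : G.IsSpanningTree S) :
    ∀ ℱ : Finset (Finset E), ℱ ⊆ G.lonelyCuts x S → ∀ g : Finset E → ℝ,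
      (∀ C ∈ ℱ, 0 ≤ g C) →
      ∑ C ∈ ℱ, g C ≤ ∑ e, x e *
        (if h : (ℱ.filter (fun C => e ∈ C)).Nonempty
         then (ℱ.filter (fun C => e ∈ C)).sup' h g else 0) := by
  intro ℱ
  induction ℱ using Finset.strongInduction with
  | _ ℱ ih =>
    intro hsub g hg
    rcases Finset.eq_empty_or_nonempty ℱ with rfl | hne
    · simp
    · obtain ⟨C₀, hC₀, hmin⟩ := Finset.exists_min_image ℱ g hne
      set g' : Finset E → ℝ := fun C => g C - g C₀ with hg'def
      set ℱ' : Finset (Finset E) := ℱ.erase C₀ with hℱ'def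
      have hg'nonneg : ∀ C ∈ ℱ, 0 ≤ g' C := fun C hC => sub_nonneg.2 (hmin C hC)
      have h1 : ∑ C ∈ ℱ', g' C = ∑ C ∈ ℱ, g C - ℱ.card * g C₀ := by
        have e0 : ∑ C ∈ ℱ', g' C = ∑ C ∈ ℱ, g' C :=
          Finset.sum_erase ℱ (show g' C₀ = 0 by simp [hg'def])
        rw [e0, hg'def, Finset.sum_sub_distrib, Finset.sum_const, nsmul_eq_mul]
      have h2 := ih ℱ' (Finset.erase_ssubset hC₀) ((Finset.erase_subset _ _).trans hsub)
        g' (fun C hC => hg'nonneg C (Finset.mem_of_mem_erase hC))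
      have h3 : ∀ e : E,
          (if h : (ℱ'.filter (fun C => e ∈ C)).Nonempty
           then (ℱ'.filter (fun C => e ∈ C)).sup' h g' else 0) ≤
          (if h : (ℱ.filter (fun C => e ∈ C)).Nonempty
           then (ℱ.filter (fun C => e ∈ C)).sup' h g' else 0) := by
        intro e
        by_cases h' : (ℱ'.filter (fun C => e ∈ C)).Nonempty
        · have hsub' : ℱ'.filter (fun C => e ∈ C) ⊆ ℱ.filter (fun C => e ∈ C) :=
            Finset.filter_subset_filter _ (Finset.erase_subset _ _)
          have h'' : (ℱ.filter (fun C => e ∈ C)).Nonempty := h'.mono hsub'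
          rw [dif_pos h', dif_pos h'']
          exact Finset.sup'_le h' g' (fun C hC => Finset.le_sup' g' (hsub' hC))
        · rw [dif_neg h']
          by_cases h'' : (ℱ.filter (fun C => e ∈ C)).Nonempty
          · rw [dif_pos h'']
            obtain ⟨C, hC⟩ := h''
            exact le_trans (hg'nonneg C (Finset.mem_of_mem_filter C hC))
              (Finset.le_sup' g' hC)
          · rw [dif_neg h'']
      have h5 : ∀ e : E,
          (if h : (ℱ.filter (fun C => e ∈ C)).Nonempty
           then (ℱ.filter (fun C => e ∈ C)).sup' h g else 0) =
          (if h : (ℱ.filter (fun C => e ∈ C)).Nonempty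
           then (ℱ.filter (fun C => e ∈ C)).sup' h g' else 0) +
          g C₀ * (if (ℱ.filter (fun C => e ∈ C)).Nonempty then 1 else 0) := by
        intro e
        by_cases h' : (ℱ.filter (fun C => e ∈ C)).Nonempty
        · rw [dif_pos h', dif_pos h', if_pos h', mul_one, Finset.sup'_add]
          apply Finset.sup'_congr h' rfl
          intro C _
          simp [hg'def]
        · rw [dif_neg h', dif_neg h', if_neg h', mul_zero, add_zero]
      set B : Finset E := univ.filter (fun e => (ℱ.filter (fun C => e ∈ C)).Nonempty)
        with hB
      have h7 : (ℱ.card : ℝ) ≤ ∑ e ∈ B, x e := by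
        have hpb := partition_bound G hx hS hsub
        have hBeq : B = univ.filter (fun e => ∃ C ∈ ℱ, e ∈ C) := by
          apply Finset.filter_congr
          intro e _
          simp [Finset.filter_nonempty_iff]
        rw [hBeq]
        exact hpb
      have h6 : ∑ e, x e * (if h : (ℱ.filter (fun C => e ∈ C)).Nonempty
            then (ℱ.filter (fun C => e ∈ C)).sup' h g else 0)
          = (∑ e, x e * (if h : (ℱ.filter (fun C => e ∈ C)).Nonempty
            then (ℱ.filter (fun C => e ∈ C)).sup' h g' else 0))
            + g C₀ * ∑ e ∈ B, x e := by
        rw [hB, Finset.sum_filter, Finset.mul_sum, ← Finset.sum_add_distrib]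
        apply Finset.sum_congr rfl
        intro e _
        rw [h5 e]
        by_cases hcond : (ℱ.filter (fun C => e ∈ C)).Nonempty
        · rw [if_pos hcond, if_pos hcond]; ring
        · rw [if_neg hcond, if_neg hcond]; ring
      have hsum3 : ∑ e, x e * (if h : (ℱ'.filter (fun C => e ∈ C)).Nonempty
            then (ℱ'.filter (fun C => e ∈ C)).sup' h g' else 0)
          ≤ ∑ e, x e * (if h : (ℱ.filter (fun C => e ∈ C)).Nonempty
            then (ℱ.filter (fun C => e ∈ C)).sup' h g' else 0) :=
        Finset.sum_le_sum (fun e _ => mul_le_mul_of_nonneg_left (h3 e) (hx.1 e))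
      have h8 : (ℱ.card : ℝ) * g C₀ ≤ (∑ e ∈ B, x e) * g C₀ :=
        mul_le_mul_of_nonneg_right h7 (hg C₀ hC₀)
      rw [h6]
      have hsplit : ∑ C ∈ ℱ, g C = ∑ C ∈ ℱ', g' C + ℱ.card * g C₀ := by
        rw [h1]; ring
      rw [hsplit]
      have := le_trans h2 hsum3
      nlinarith [this, h8]

end Aux5

/-- For every spanning tree `S`,
`c^S(x*) − c(x*) ≤ 2·Σ_{C ∈ ℒ_S} (x*(C) − 1)·c(S ∩ C)`. -/
theorem reconnection_cost_bound (G : MultiGraph V E) (hG : G.Connected)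
    (T : Finset V) (hT : Even T.card) (c : E → ℝ) (hc : ∀ e, 0 ≤ c e)
    (x : E → ℝ) (hx : G.LPFeasible T x)
    (S : Finset E) (hS : G.IsSpanningTree S) :
    (∑ e, G.modCost c x S e * x e) - (∑ e, c e * x e) ≤
      2 * ∑ C ∈ G.lonelyCuts x S, ((∑ f ∈ C, x f) - 1) * ∑ f ∈ S ∩ C, c f := by
  classical
  set ℒ : Finset (Finset E) := G.lonelyCuts x S with hℒ
  set γ : Finset E → ℝ := fun C => ∑ f ∈ S ∩ C, c f with hγ
  have hγ0 : ∀ C ∈ ℒ, 0 ≤ γ C := fun C _ => Finset.sum_nonneg (fun f _ => hc f)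
  have hkey := key_bound G hx hS ℒ (Finset.Subset.refl _) γ hγ0
  set M : E → ℝ := fun e => (if h : (ℒ.filter (fun C => e ∈ C)).Nonempty
      then (ℒ.filter (fun C => e ∈ C)).sup' h γ else 0) with hM
  set A : E → ℝ := fun e => ∑ C ∈ ℒ.filter (fun C => e ∈ C), γ C with hA
  have hmod : ∀ e, G.modCost c x S e = c e + 2 * (A e - M e) := fun e => rfl
  have hL : (∑ e, G.modCost c x S e * x e) - (∑ e, c e * x e)
      = 2 * ((∑ e, A e * x e) - (∑ e, M e * x e)) := by
    rw [← Finset.sum_sub_distrib, ← Finset.sum_sub_distrib, Finset.mul_sum]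
    apply Finset.sum_congr rfl
    intro e _
    rw [hmod e]
    ring
  have hP1 : ∑ e, A e * x e = ∑ C ∈ ℒ, γ C * ∑ e ∈ C, x e := by
    have hstep : ∀ e, A e * x e = ∑ C ∈ ℒ, if e ∈ C then γ C * x e else 0 := by
      intro e
      rw [hA]
      simp only
      rw [Finset.sum_mul, Finset.sum_filter]
    rw [Finset.sum_congr rfl (fun e _ => hstep e), Finset.sum_comm]
    apply Finset.sum_congr rfl
    intro C _
    rw [Finset.sum_ite_mem, Finset.univ_inter, Finset.mul_sum]
  have hR : (2 : ℝ) * ∑ C ∈ ℒ, ((∑ f ∈ C, x f) - 1) * γ C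
      = 2 * ((∑ C ∈ ℒ, γ C * ∑ e ∈ C, x e) - ∑ C ∈ ℒ, γ C) := by
    congr 1
    rw [← Finset.sum_sub_distrib]
    apply Finset.sum_congr rfl
    intro C _
    ring
  have hP2 : ∑ C ∈ ℒ, γ C ≤ ∑ e, M e * x e := by
    calc ∑ C ∈ ℒ, γ C ≤ ∑ e, x e * M e := hkey
      _ = ∑ e, M e * x e := Finset.sum_congr rfl (fun e _ => mul_comm _ _)
  rw [hL, hR]
  rw [hP1]
  linarith

end MultiGraph
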